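/- Let s be a natural number and let U, V, A, B ∈ ℤ[[X]] be formal power series such that the constant coefficients of U and V are both 1, the coefficients of X^i in U and in V agree for all i < s, and U·A = V·B. Then the coefficients of X^i in A and in B agree for all i < s, and the coefficient of X^s in A equals the coefficient of X^s in B plus (coefficient of X^s in V minus coefficient of X^s in U) times the constant coefficient of B. -/

import Mathlib

open PowerSeries
theorem power_series_coefficient_comparison (s : ℕ) (U V A B : PowerSeries ℤ)
    (hU : PowerSeries.constantCoeff U = 1) (hV : PowerSeries.constantCoeff V = 1)
    (hagree : ∀ i : ℕ, i < s → PowerSeries.coeff i U = PowerSeries.coeff i V)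
    (heq : U * A = V * B) :
    (∀ i : ℕ, i < s → PowerSeries.coeff i A = PowerSeries.coeff i B) ∧
    PowerSeries.coeff s A =
      PowerSeries.coeff s B +
        (PowerSeries.coeff s V - PowerSeries.coeff s U) * PowerSeries.constantCoeff B := by
  have hUu : IsUnit U := PowerSeries.isUnit_iff_constantCoeff.mpr (by rw [hU]; exact isUnit_one)
  -- U * (A - B) = (V - U) * B
  have key : U * (A - B) = (V - U) * B := by linear_combination heq
  have hWdvd : (X : ℤ⟦X⟧) ^ s ∣ (V - U) := by
    rw [X_pow_dvd_iff]
    intro m hm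
    simp [map_sub, (hagree m hm).symm]
  have hdvdUD : (X : ℤ⟦X⟧) ^ s ∣ U * (A - B) := key ▸ hWdvd.mul_right B
  have hdvdD : (X : ℤ⟦X⟧) ^ s ∣ (A - B) := hUu.dvd_mul_left.mp hdvdUD
  have hDlt : ∀ m < s, PowerSeries.coeff m (A - B) = 0 := X_pow_dvd_iff.mp hdvdD
  have h1 : ∀ i : ℕ, i < s → PowerSeries.coeff i A = PowerSeries.coeff i B := by
    intro i hi
    have := hDlt i hi
    simpa [sub_eq_zero] using this
  refine ⟨h1, ?_⟩
  obtain ⟨C, hC⟩ := hWdvd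
  have hcs : PowerSeries.coeff s (A - B) =
      (PowerSeries.coeff s V - PowerSeries.coeff s U) * PowerSeries.constantCoeff B := by
    have e1 : PowerSeries.coeff s (U * (A - B)) = PowerSeries.coeff s (A - B) := by
      rw [PowerSeries.coeff_mul]
      rw [Finset.sum_eq_single (0, s)]
      · simp [hU]
      · rintro ⟨a, b⟩ hab hne
        have hab : a + b = s := Finset.HasAntidiagonal.mem_antidiagonal.mp hab
        have hb : b < s := by
          by_contra h
          push_neg at h
          have hb' : b = s := by omega
          have ha' : a = 0 := by omega
          exact hne (by rw [ha', hb'])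
        rw [hDlt b hb, mul_zero]
      · intro h; simp at h
    have e2 : PowerSeries.coeff s ((V - U) * B) =
        (PowerSeries.coeff s V - PowerSeries.coeff s U) * PowerSeries.constantCoeff B := by
      rw [hC, mul_assoc]
      have := PowerSeries.coeff_X_pow_mul (C * B) s 0
      rw [zero_add] at this
      rw [this]
      have hc0 : PowerSeries.constantCoeff C =
          PowerSeries.coeff s V - PowerSeries.coeff s U := by
        have := PowerSeries.coeff_X_pow_mul C s 0
        rw [zero_add] at this
        rw [← hC] at this
        simp only [map_sub] at this
        simpa using this.symm
      simp [PowerSeries.coeff_mul, Finset.Nat.antidiagonal_zero, hc0]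
    rw [← e1, key, e2]
  have := hcs
  simp only [map_sub] at this
  linarith
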